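/- arXiv:1903.04854 — 3 statements merged into one kernel-verified Lean document; each statement's English description precedes it below -/
import Mathlib

section
/- Let E be a Banach lattice and X a Banach space. If T : E → X is a continuous operator such that Tx_n → 0 in norm for every disjoint sequence (x_n) in E, and the modulus |T| exists, then the carrier C_T = {x ∈ E : |T|(|x|) = 0}^d of T contains no infinite disjoint sequence of nonzero positive vectors. -/
open Filter Topology Bornology

/-- A sequence in a normed lattice is unbounded-norm (un-) null if `‖ |xₙ| ⊓ u ‖ → 0`
for every positive `u`. -/
def UnNullSeq {G : Type*} [NormedAddCommGroup G] [Lattice G] [HasSolidNorm G] [IsOrderedAddMonoid G] (x : ℕ → G) : Prop :=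
  ∀ u : G, 0 ≤ u → Tendsto (fun n => ‖|x n| ⊓ u‖) atTop (𝓝 0)

/-- A pairwise disjoint sequence. -/
def DisjointSeq {G : Type*} [NormedAddCommGroup G] [Lattice G] [HasSolidNorm G] [IsOrderedAddMonoid G] (x : ℕ → G) : Prop :=
  Pairwise fun n m => |x n| ⊓ |x m| = 0

/-- A norm bounded sequence. -/
def NormBddSeq {G : Type*} [NormedAddCommGroup G] [Lattice G] [HasSolidNorm G] [IsOrderedAddMonoid G] (x : ℕ → G) : Prop :=
  ∃ C : ℝ, ∀ n, ‖x n‖ ≤ C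

/-- The solid hull of a set. -/
def SolidHull {G : Type*} [NormedAddCommGroup G] [Lattice G] [HasSolidNorm G] [IsOrderedAddMonoid G] (A : Set G) : Set G :=
  {x | ∃ y ∈ A, |x| ≤ |y|}

/-- A bounded set is L-weakly compact if every disjoint sequence in its solid hull is
norm null. -/
def LWCSet {G : Type*} [NormedAddCommGroup G] [Lattice G] [HasSolidNorm G] [IsOrderedAddMonoid G] (A : Set G) : Prop :=
  IsBounded A ∧ ∀ x : ℕ → G, (∀ n, x n ∈ SolidHull A) → DisjointSeq x →
    Tendsto (fun n => ‖x n‖) atTop (𝓝 0)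

/-- The norm is order continuous: every net decreasing to `0` is norm null. -/
def OrderContNorm (G : Type*) [NormedAddCommGroup G] [Lattice G] [HasSolidNorm G] [IsOrderedAddMonoid G] : Prop :=
  ∀ (ι : Type) [SemilatticeSup ι] [Nonempty ι] (x : ι → G),
    Antitone x → IsGLB (Set.range x) 0 → Tendsto (fun i => ‖x i‖) atTop (𝓝 0)

/-- Dedekind σ-completeness: every bounded-above increasing sequence has a supremum. -/
def DedekindSigmaComplete (G : Type*) [NormedAddCommGroup G] [Lattice G] [HasSolidNorm G] [IsOrderedAddMonoid G] : Prop :=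
  ∀ x : ℕ → G, Monotone x → (∃ b, ∀ n, x n ≤ b) → ∃ s, IsLUB (Set.range x) s

/-- An atom of a Banach lattice. -/
def IsLatticeAtom {G : Type*} [NormedAddCommGroup G] [Lattice G] [HasSolidNorm G] [IsOrderedAddMonoid G] [NormedSpace ℝ G] (a : G) : Prop :=
  0 < a ∧ ∀ x : G, 0 ≤ x → x ≤ a → ∃ c : ℝ, x = c • a

/-- An atomic Banach lattice: every nonzero positive element dominates an atom. -/
def AtomicLattice (G : Type*) [NormedAddCommGroup G] [Lattice G] [HasSolidNorm G] [IsOrderedAddMonoid G] [NormedSpace ℝ G] : Prop :=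
  ∀ x : G, 0 < x → ∃ a, IsLatticeAtom a ∧ a ≤ x

/-- A realization of the Banach lattice `E'` as the topological dual of the Banach lattice
`E`: a linear isometric isomorphism onto `NormedSpace.Dual ℝ E` that identifies the order. -/
structure DualPairing (E E' : Type*) [NormedAddCommGroup E] [Lattice E] [HasSolidNorm E] [IsOrderedAddMonoid E] [NormedSpace ℝ E]
    [NormedAddCommGroup E'] [Lattice E'] [HasSolidNorm E'] [IsOrderedAddMonoid E'] [NormedSpace ℝ E'] where
  toDual : E' ≃ₗᵢ[ℝ] StrongDual ℝ E
  pos_iff : ∀ f : E', 0 ≤ f ↔ ∀ x : E, 0 ≤ x → 0 ≤ toDual f x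

section Pairing

variable {E E' : Type*} [NormedAddCommGroup E] [Lattice E] [HasSolidNorm E] [IsOrderedAddMonoid E] [NormedSpace ℝ E]
  [NormedAddCommGroup E'] [Lattice E'] [HasSolidNorm E'] [IsOrderedAddMonoid E'] [NormedSpace ℝ E']

/-- A bounded set `A ⊆ E` is weak L-weakly compact if `sup_{x ∈ A} |x'ₙ(x)| → 0` for every
norm bounded un-null sequence `(x'ₙ)` in the dual `E'`. -/
def WeakLWCSet (P : DualPairing E E') (A : Set E) : Prop :=
  IsBounded A ∧ ∀ f : ℕ → E', NormBddSeq f → UnNullSeq f →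
    Tendsto (fun n => ⨆ x ∈ A, |P.toDual (f n) x|) atTop (𝓝 0)

/-- A bounded set `B ⊆ E'` is weak* L-weakly compact if `sup_{x' ∈ B} |x'(xₙ)| → 0` for every
norm bounded un-null sequence `(xₙ)` in `E`. -/
def WeakStarLWCSet (P : DualPairing E E') (B : Set E') : Prop :=
  IsBounded B ∧ ∀ x : ℕ → E, NormBddSeq x → UnNullSeq x →
    Tendsto (fun n => ⨆ f ∈ B, |P.toDual f (x n)|) atTop (𝓝 0)

end Pairing

section Op

variable {E F X : Type*} [NormedAddCommGroup E] [Lattice E] [HasSolidNorm E] [IsOrderedAddMonoid E] [NormedSpace ℝ E]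
  [NormedAddCommGroup X] [NormedSpace ℝ X]

/-- `T : E → X` is M-weakly compact if `‖Txₙ‖ → 0` for every norm bounded disjoint
sequence in `E`. -/
def MWeaklyCompact (T : E →L[ℝ] X) : Prop :=
  ∀ x : ℕ → E, NormBddSeq x → DisjointSeq x → Tendsto (fun n => ‖T (x n)‖) atTop (𝓝 0)

/-- `T : E → X` is weak M-weakly compact if `‖Txₙ‖ → 0` for every un-null sequence in the
closed unit ball of `E`. -/
def WeakMWeaklyCompact (T : E →L[ℝ] X) : Prop :=
  ∀ x : ℕ → E, (∀ n, ‖x n‖ ≤ 1) → UnNullSeq x → Tendsto (fun n => ‖T (x n)‖) atTop (𝓝 0)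

/-- `T : X → E` is L-weakly compact if the image of the closed unit ball is an
L-weakly compact set. -/
def LWCOperator (T : X →L[ℝ] E) : Prop :=
  LWCSet (T '' Metric.closedBall 0 1)

/-- `T : X → E` is weak L-weakly compact if `sup_{x ∈ B_X} |fₙ(Tx)| → 0` for every norm
bounded un-null sequence `(fₙ)` in `E'`. -/
def WeakLWCOperator {E' : Type*} [NormedAddCommGroup E'] [Lattice E'] [HasSolidNorm E'] [IsOrderedAddMonoid E'] [NormedSpace ℝ E']
    (P : DualPairing E E') (T : X →L[ℝ] E) : Prop :=
  ∀ f : ℕ → E', NormBddSeq f → UnNullSeq f →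
    Tendsto (fun n => ⨆ x ∈ Metric.closedBall (0 : X) 1, |P.toDual (f n) (T x)|) atTop (𝓝 0)

/-- `T : X → E'` is weak* L-weakly compact if its image of the unit ball is a weak*
L-weakly compact set. -/
def WeakStarLWCOperator {E' : Type*} [NormedAddCommGroup E'] [Lattice E'] [HasSolidNorm E'] [IsOrderedAddMonoid E'] [NormedSpace ℝ E']
    (P : DualPairing E E') (T : X →L[ℝ] E') : Prop :=
  ∀ x : ℕ → E, NormBddSeq x → UnNullSeq x →
    Tendsto (fun n => ⨆ y ∈ Metric.closedBall (0 : X) 1, |P.toDual (T y) (x n)|) atTop (𝓝 0)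

/-- A positive operator. -/
def PositiveOp {F : Type*} [NormedAddCommGroup F] [Lattice F] [HasSolidNorm F] [IsOrderedAddMonoid F] [NormedSpace ℝ F] (T : E →L[ℝ] F) : Prop :=
  ∀ x : E, 0 ≤ x → 0 ≤ T x

end Op

/-- Membership in `G^a`, the maximal ideal on which the induced norm is order continuous:
`x ∈ G^a` iff every disjoint sequence in `[0, |x|]` is norm null. -/
def InOrderContPart {G : Type*} [NormedAddCommGroup G] [Lattice G] [HasSolidNorm G] [IsOrderedAddMonoid G] (x : G) : Prop :=
  ∀ y : ℕ → G, (∀ n, 0 ≤ y n ∧ y n ≤ |x|) → DisjointSeq y →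
    Tendsto (fun n => ‖y n‖) atTop (𝓝 0)





section Aux
variable {G : Type*} [Lattice G] [AddCommGroup G] [CovariantClass G G (· + ·) (· ≤ ·)]

lemma aux_add_inf_zero {a b c : G} (ha : 0 ≤ a) (hb : 0 ≤ b) (hc : 0 ≤ c)
    (hac : a ⊓ c = 0) (hbc : b ⊓ c = 0) : (a + b) ⊓ c = 0 := by
  apply le_antisymm _ (le_inf (add_nonneg ha hb) hc)
  have key : (a + b) ⊓ c ≤ a ⊓ c + b ⊓ c := by
    rw [add_inf, inf_add, inf_add]
    have h1 : (a + b) ⊓ c ≤ a + b := inf_le_left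
    have h2 : (a + b) ⊓ c ≤ c := inf_le_right
    exact le_inf (le_inf h1 (h2.trans (le_add_of_nonneg_right hb)))
      (le_inf (h2.trans (le_add_of_nonneg_left ha)) (h2.trans (le_add_of_nonneg_left hc)))
  calc (a + b) ⊓ c ≤ a ⊓ c + b ⊓ c := key
    _ = 0 := by rw [hac, hbc, add_zero]

lemma aux_nsmul_inf_zero {a c : G} (ha : 0 ≤ a) (hc : 0 ≤ c) (hac : a ⊓ c = 0) (n : ℕ) :
    (n • a) ⊓ c = 0 := by
  induction n with
  | zero => simpa using hc
  | succ k ih =>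
      rw [succ_nsmul]
      exact aux_add_inf_zero (nsmul_nonneg ha k) ha hc ih hac

lemma aux_abs_nsmul_le (y : G) (n : ℕ) : |n • y| ≤ n • |y| := by
  induction n with
  | zero => simp
  | succ k ih =>
      rw [succ_nsmul, succ_nsmul]
      exact (abs_add_le _ _).trans (add_le_add ih le_rfl)

end Aux

/-- If `T : E → X` (between Banach lattices, so that the modulus `S = |T|` exists, characterized
by the Riesz–Kantorovich formula) sends every disjoint sequence to a norm null sequence, then
the carrier `C_T = {x : |T|(|x|) = 0}ᵈ` contains no infinite disjoint sequence of nonzero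
positive vectors. -/
theorem stmt0 {E : Type*} [NormedAddCommGroup E] [Lattice E] [HasSolidNorm E] [IsOrderedAddMonoid E] [NormedSpace ℝ E] [CompleteSpace E] {X : Type*} [NormedAddCommGroup X] [Lattice X] [HasSolidNorm X] [IsOrderedAddMonoid X] [NormedSpace ℝ X] [CompleteSpace X] (T S : E →L[ℝ] X)
    (hS : ∀ x : E, 0 ≤ x → IsLUB ((fun y => T y) '' {y : E | |y| ≤ x}) (S x))
    (hT : ∀ x : ℕ → E, DisjointSeq x → Tendsto (fun n => ‖T (x n)‖) atTop (𝓝 0)) :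
    ¬ ∃ x : ℕ → E,
      (∀ n, 0 < x n ∧ x n ∈ {y : E | ∀ z : E, S |z| = 0 → |y| ⊓ |z| = 0}) ∧
      DisjointSeq x := by
  
  rintro ⟨x, hx, hdisj⟩
  -- Step 1: for each n there is y with |y| ≤ x n and T y ≠ 0.
  have hy : ∀ n, ∃ y : E, |y| ≤ x n ∧ T y ≠ 0 := by
    intro n
    by_contra hcon
    push_neg at hcon
    have hxpos := (hx n).1
    have hlub := hS (x n) hxpos.le
    have himg : (fun y => T y) '' {y : E | |y| ≤ x n} = {0} := by
      apply Set.eq_singleton_iff_unique_mem.mpr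
      constructor
      · exact ⟨0, by simpa using hxpos.le, by simp⟩
      · rintro v ⟨y, hy, rfl⟩
        exact hcon y hy
    rw [himg] at hlub
    have hS0 : S (x n) = 0 := hlub.unique isLUB_singleton
    have habs : |x n| = x n := abs_of_pos hxpos
    have := (hx n).2 (x n) (by rw [habs]; exact hS0)
    rw [habs, inf_idem] at this
    exact hxpos.ne' this
  choose y hyle hTy using hy
  -- Step 2: scale by naturals so that ‖T (z n)‖ ≥ 1.
  set N : ℕ → ℕ := fun n => ⌈(‖T (y n)‖)⁻¹⌉₊ with hN
  set z : ℕ → E := fun n => N n • y n with hz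
  have hcpos : ∀ n, 0 < ‖T (y n)‖ := fun n => norm_pos_iff.mpr (hTy n)
  -- z is a disjoint sequence
  have hyinf : ∀ n m, n ≠ m → |y n| ⊓ |y m| = 0 := by
    intro n m hnm
    apply le_antisymm _ (le_inf (abs_nonneg _) (abs_nonneg _))
    have hxn := abs_of_pos (hx n).1
    have hxm := abs_of_pos (hx m).1
    calc |y n| ⊓ |y m| ≤ |x n| ⊓ |x m| := by
          rw [hxn, hxm]; exact inf_le_inf (hyle n) (hyle m)
      _ = 0 := hdisj hnm
  have hzdisj : DisjointSeq z := by
    intro n m hnm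
    apply le_antisymm _ (le_inf (abs_nonneg _) (abs_nonneg _))
    have h1 : (N n • |y n|) ⊓ |y m| = 0 :=
      aux_nsmul_inf_zero (abs_nonneg _) (abs_nonneg _) (hyinf n m hnm) (N n)
    have h2 : (N m • |y m|) ⊓ (N n • |y n|) = 0 :=
      aux_nsmul_inf_zero (abs_nonneg _) (nsmul_nonneg (abs_nonneg _) _)
        (by rw [inf_comm]; exact h1) (N m)
    calc |z n| ⊓ |z m| ≤ (N n • |y n|) ⊓ (N m • |y m|) :=
          inf_le_inf (aux_abs_nsmul_le _ _) (aux_abs_nsmul_le _ _)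
      _ = 0 := by rw [inf_comm]; exact h2
  -- Step 3: ‖T (z n)‖ ≥ 1 for all n
  have hlow : ∀ n, (1 : ℝ) ≤ ‖T (z n)‖ := by
    intro n
    have hmap : T (z n) = (N n : ℝ) • T (y n) := by
      simp only [hz]
      rw [← Nat.cast_smul_eq_nsmul ℝ (N n) (y n), map_smul]
    rw [hmap, norm_smul, Real.norm_natCast]
    have hle : (‖T (y n)‖)⁻¹ ≤ (N n : ℝ) := Nat.le_ceil _
    calc (1 : ℝ) = (‖T (y n)‖)⁻¹ * ‖T (y n)‖ := (inv_mul_cancel₀ (hcpos n).ne').symm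
      _ ≤ (N n : ℝ) * ‖T (y n)‖ := by
          exact mul_le_mul_of_nonneg_right hle (norm_nonneg _)
  -- Step 4: contradiction with hT
  have htend := hT z hzdisj
  have hev : ∀ᶠ n in atTop, ‖T (z n)‖ < 1 :=
    htend.eventually_lt_const one_pos
  obtain ⟨n, hn⟩ := hev.exists
  exact absurd (hlow n) (not_le.mpr hn)
end

section
/- Let E be a Banach lattice and A ⊆ E a weak L-weakly compact set. Then the solid hull Sol(A) = {x ∈ E : ∃ y ∈ A, |x| ≤ |y|} is also weak L-weakly compact. -/
open Filter Topology Bornology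

section MyAux

variable {G : Type*} [NormedAddCommGroup G] [Lattice G] [HasSolidNorm G] [IsOrderedAddMonoid G]

lemma my_riesz_inf_add {x z w : G} (hx : 0 ≤ x) (hz : 0 ≤ z) (hw : 0 ≤ w) :
    (x + z) ⊓ w ≤ x ⊓ w + z ⊓ w := by
  have h : x ⊓ w + z ⊓ w = ((x + z) ⊓ (x + w)) ⊓ ((w + z) ⊓ (w + w)) := by
    rw [inf_add, add_inf, add_inf]
  rw [h]
  refine le_inf (le_inf inf_le_left ?_) (le_inf ?_ ?_)
  · exact inf_le_right.trans (le_add_of_nonneg_left hx)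
  · exact inf_le_right.trans (le_add_of_nonneg_right hz)
  · exact inf_le_right.trans (le_add_of_nonneg_left hw)

lemma my_disjoint_nsmul {a b : G} (ha : 0 ≤ a) (hb : 0 ≤ b) (hab : a ⊓ b = 0) :
    ∀ n : ℕ, a ⊓ n • b = 0 := by
  intro n
  induction n with
  | zero => simpa using inf_eq_right.mpr ha
  | succ n ih =>
      have hnb : 0 ≤ n • b := nsmul_nonneg hb n
      have h1 : a ⊓ (n + 1) • b ≤ a ⊓ n • b + a ⊓ b := by
        rw [succ_nsmul]
        calc a ⊓ (n • b + b) = (n • b + b) ⊓ a := inf_comm _ _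
        _ ≤ n • b ⊓ a + b ⊓ a := my_riesz_inf_add hnb hb ha
        _ = a ⊓ n • b + a ⊓ b := by rw [inf_comm (n • b) a, inf_comm b a]
      rw [ih, hab, add_zero] at h1
      exact le_antisymm h1 (le_inf ha (nsmul_nonneg hb _))

lemma my_posPart_le_abs (a : G) : a⁺ ≤ |a| := by
  have : a⁺ = a ⊔ 0 := rfl
  rw [this]
  exact sup_le (le_abs_self a) (abs_nonneg a)

lemma my_negPart_le_abs (a : G) : a⁻ ≤ |a| := by
  have : a⁻ = -a ⊔ 0 := rfl
  rw [this]
  exact sup_le (neg_le_abs a) (abs_nonneg a)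

lemma my_norm_posPart_le (a : G) : ‖a⁺‖ ≤ ‖a‖ := by
  rw [← norm_abs_eq_norm a]
  exact HasSolidNorm.solid (by rw [abs_of_nonneg (posPart_nonneg a), abs_abs]; exact my_posPart_le_abs a)

lemma my_norm_negPart_le (a : G) : ‖a⁻‖ ≤ ‖a‖ := by
  rw [← norm_abs_eq_norm a]
  exact HasSolidNorm.solid (by rw [abs_of_nonneg (negPart_nonneg a), abs_abs]; exact my_negPart_le_abs a)

end MyAux

section MyPairAux

variable {E E' : Type*} [NormedAddCommGroup E] [Lattice E] [HasSolidNorm E] [IsOrderedAddMonoid E] [NormedSpace ℝ E]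
  [NormedAddCommGroup E'] [Lattice E'] [HasSolidNorm E'] [IsOrderedAddMonoid E'] [NormedSpace ℝ E']

lemma my_toDual_mono (P : DualPairing E E') {f : E'} (hf : 0 ≤ f) {a b : E} (hab : a ≤ b) :
    P.toDual f a ≤ P.toDual f b := by
  have h := (P.pos_iff f).mp hf (b - a) (sub_nonneg.mpr hab)
  rw [map_sub] at h
  linarith

lemma my_toDual_le (P : DualPairing E E') {f g : E'} (hfg : f ≤ g) {a : E} (ha : 0 ≤ a) :
    P.toDual f a ≤ P.toDual g a := by
  have h := (P.pos_iff (g - f)).mp (sub_nonneg.mpr hfg) a ha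
  rw [map_sub, ContinuousLinearMap.sub_apply] at h
  linarith

lemma my_abs_apply_le (P : DualPairing E E') (f : E') (x : E) :
    |P.toDual f x| ≤ P.toDual |f| |x| := by
  have habs : ∀ z : E, 0 ≤ z → |P.toDual f z| ≤ P.toDual |f| z := by
    intro z hz
    rw [abs_le]
    constructor
    · have hnf : -|f| ≤ f := by
        rw [neg_le, ← abs_neg f]
        exact le_abs_self (-f)
      have h := my_toDual_le P hnf hz
      rw [map_neg, ContinuousLinearMap.neg_apply] at h
      linarith
    · exact my_toDual_le P (le_abs_self f) hz
  calc |P.toDual f x| = |P.toDual f x⁺ - P.toDual f x⁻| := by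
        rw [← map_sub, posPart_sub_negPart]
    _ ≤ |P.toDual f x⁺| + |P.toDual f x⁻| := abs_sub (P.toDual f x⁺) (P.toDual f x⁻)
    _ ≤ P.toDual |f| x⁺ + P.toDual |f| x⁻ :=
        add_le_add (habs _ (posPart_nonneg x)) (habs _ (negPart_nonneg x))
    _ = P.toDual |f| |x| := by rw [← map_add, posPart_add_negPart]

/-- The key component lemma: for a positive functional `f'` and `y : E` there is `g` with
`|g| ≤ f'` and `g(y) ≥ f'(|y|)`. -/
lemma my_component (P : DualPairing E E') {f' : E'} (hf' : 0 ≤ f') (y : E) :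
    ∃ g : E', |g| ≤ f' ∧ P.toDual f' |y| ≤ P.toDual g y := by
  set f : E →L[ℝ] ℝ := P.toDual f' with hfdef
  have hfpos : ∀ x : E, 0 ≤ x → 0 ≤ f x := (P.pos_iff f').mp hf'
  have hfmono : ∀ {a b : E}, a ≤ b → f a ≤ f b := fun hab => my_toDual_mono P hf' hab
  set u : E := y⁺ with hu
  have hu0 : 0 ≤ u := posPart_nonneg y
  set h₀ : E → ℝ := fun x => ⨆ n : ℕ, f (x ⊓ n • u) with hh0
  have hbdd : ∀ x : E, 0 ≤ x → BddAbove (Set.range fun n : ℕ => f (x ⊓ n • u)) := by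
    intro x hx
    refine ⟨f x, ?_⟩
    rintro - ⟨n, rfl⟩
    exact hfmono inf_le_left
  have h₀_le : ∀ x : E, 0 ≤ x → h₀ x ≤ f x := fun x hx => ciSup_le fun n => hfmono inf_le_left
  have h₀_nonneg : ∀ x : E, 0 ≤ x → 0 ≤ h₀ x := by
    intro x hx
    have h0 : f (x ⊓ (0 : ℕ) • u) = 0 := by
      rw [zero_smul, inf_eq_right.mpr hx, map_zero]
    calc (0 : ℝ) = f (x ⊓ (0 : ℕ) • u) := h0.symm
      _ ≤ h₀ x := le_ciSup (hbdd x hx) 0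
  have h₀_add : ∀ x z : E, 0 ≤ x → 0 ≤ z → h₀ (x + z) = h₀ x + h₀ z := by
    intro x z hx hz
    apply le_antisymm
    · apply ciSup_le
      intro n
      have hnu : 0 ≤ n • u := nsmul_nonneg hu0 n
      calc f ((x + z) ⊓ n • u) ≤ f (x ⊓ n • u + z ⊓ n • u) := hfmono (my_riesz_inf_add hx hz hnu)
        _ = f (x ⊓ n • u) + f (z ⊓ n • u) := map_add f _ _
        _ ≤ h₀ x + h₀ z := add_le_add (le_ciSup (hbdd x hx) n) (le_ciSup (hbdd z hz) n)
    · have key : ∀ n m : ℕ, f (x ⊓ n • u) + f (z ⊓ m • u) ≤ h₀ (x + z) := by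
        intro n m
        have h1 : x ⊓ n • u + z ⊓ m • u ≤ (x + z) ⊓ (n + m) • u := by
          refine le_inf (add_le_add inf_le_left inf_le_left) ?_
          rw [add_nsmul]
          exact add_le_add inf_le_right inf_le_right
        calc f (x ⊓ n • u) + f (z ⊓ m • u) = f (x ⊓ n • u + z ⊓ m • u) := (map_add f _ _).symm
          _ ≤ f ((x + z) ⊓ (n + m) • u) := hfmono h1
          _ ≤ h₀ (x + z) := le_ciSup (hbdd _ (add_nonneg hx hz)) (n + m)
      have step1 : ∀ n : ℕ, f (x ⊓ n • u) + h₀ z ≤ h₀ (x + z) := by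
        intro n
        have h2 : h₀ z ≤ h₀ (x + z) - f (x ⊓ n • u) :=
          ciSup_le fun m => by linarith [key n m]
        linarith
      have h3 : h₀ x ≤ h₀ (x + z) - h₀ z := ciSup_le fun n => by linarith [step1 n]
      linarith
  have hHadd : ∀ a b : E,
      h₀ (a + b)⁺ - h₀ (a + b)⁻ = (h₀ a⁺ - h₀ a⁻) + (h₀ b⁺ - h₀ b⁻) := by
    intro a b
    have key : (a + b)⁺ + (a⁻ + b⁻) = (a + b)⁻ + (a⁺ + b⁺) := by
      have h1 := posPart_sub_negPart (a + b)
      have h2 := posPart_sub_negPart a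
      have h3 := posPart_sub_negPart b
      have h4 : (a + b)⁺ + (a⁻ + b⁻) - ((a + b)⁻ + (a⁺ + b⁺))
          = ((a + b)⁺ - (a + b)⁻) - ((a⁺ - a⁻) + (b⁺ - b⁻)) := by abel
      rw [h1, h2, h3] at h4
      have h5 : (a + b)⁺ + (a⁻ + b⁻) - ((a + b)⁻ + (a⁺ + b⁺)) = 0 := by rw [h4]; abel
      exact sub_eq_zero.mp h5
    have e1 : h₀ ((a + b)⁺ + (a⁻ + b⁻)) = h₀ ((a + b)⁻ + (a⁺ + b⁺)) := by rw [key]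
    rw [h₀_add _ _ (posPart_nonneg _) (add_nonneg (negPart_nonneg a) (negPart_nonneg b)),
      h₀_add _ _ (negPart_nonneg _) (add_nonneg (posPart_nonneg a) (posPart_nonneg b)),
      h₀_add _ _ (negPart_nonneg a) (negPart_nonneg b),
      h₀_add _ _ (posPart_nonneg a) (posPart_nonneg b)] at e1
    linarith
  set H : E →+ ℝ := AddMonoidHom.mk' (fun x => h₀ x⁺ - h₀ x⁻) hHadd with hH
  have hHbound : ∀ x : E, ‖H x‖ ≤ ‖f‖ * ‖x‖ := by
    intro x
    have hb1 : h₀ x⁺ ≤ ‖f‖ * ‖x‖ := by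
      have b1 : f x⁺ ≤ ‖f x⁺‖ := le_abs_self _
      have b2 := f.le_opNorm x⁺
      have b3 := mul_le_mul_of_nonneg_left (my_norm_posPart_le x) (norm_nonneg f)
      have := h₀_le _ (posPart_nonneg x)
      linarith
    have hb2 : h₀ x⁻ ≤ ‖f‖ * ‖x‖ := by
      have b1 : f x⁻ ≤ ‖f x⁻‖ := le_abs_self _
      have b2 := f.le_opNorm x⁻
      have b3 := mul_le_mul_of_nonneg_left (my_norm_negPart_le x) (norm_nonneg f)
      have := h₀_le _ (negPart_nonneg x)
      linarith
    have hn1 : 0 ≤ h₀ x⁺ := h₀_nonneg _ (posPart_nonneg x)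
    have hn2 : 0 ≤ h₀ x⁻ := h₀_nonneg _ (negPart_nonneg x)
    have hHx : H x = h₀ x⁺ - h₀ x⁻ := rfl
    rw [hHx, Real.norm_eq_abs, abs_le]
    constructor <;> linarith
  have hHcont : Continuous H := (AddMonoidHomClass.lipschitz_of_bound H ‖f‖ hHbound).continuous
  set T : E →L[ℝ] ℝ := H.toRealLinearMap hHcont with hTdef
  have hT : ∀ x : E, T x = h₀ x⁺ - h₀ x⁻ := fun x => rfl
  set g₀ : E' := P.toDual.symm T with hg₀def
  have hg₀ : P.toDual g₀ = T := P.toDual.apply_symm_apply T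
  have hTpos : ∀ x : E, 0 ≤ x → T x = h₀ x := by
    intro x hx
    have h1 : x⁺ = x := posPart_eq_self.mpr hx
    have h2 : x⁻ = 0 := negPart_eq_zero.mpr hx
    have h₀zero : h₀ (0 : E) = 0 := by
      refine le_antisymm ?_ (h₀_nonneg 0 le_rfl)
      simpa using h₀_le 0 le_rfl
    rw [hT, h1, h2, h₀zero, sub_zero]
  have hg₀pos : (0 : E') ≤ g₀ := by
    refine (P.pos_iff g₀).mpr fun x hx => ?_
    rw [hg₀, hTpos x hx]
    exact h₀_nonneg x hx
  have hg₀le : g₀ ≤ f' := by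
    rw [← sub_nonneg]
    refine (P.pos_iff _).mpr fun x hx => ?_
    rw [map_sub, ContinuousLinearMap.sub_apply, hg₀, hTpos x hx]
    have := h₀_le x hx
    linarith
  refine ⟨g₀ + g₀ - f', ?_, ?_⟩
  · refine abs_le'.mpr ⟨?_, ?_⟩
    · have h : g₀ + g₀ ≤ f' + f' := add_le_add hg₀le hg₀le
      calc g₀ + g₀ - f' ≤ f' + f' - f' := sub_le_sub_right h f'
        _ = f' := add_sub_cancel_right f' f'
    · have h : (0 : E') ≤ g₀ + g₀ := add_nonneg hg₀pos hg₀pos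
      calc -(g₀ + g₀ - f') = f' - (g₀ + g₀) := neg_sub _ _
        _ ≤ f' := sub_le_self f' h
  · have hpos : h₀ y⁺ = f y⁺ := by
      refine le_antisymm (h₀_le _ (posPart_nonneg y)) ?_
      have e : y⁺ ⊓ (1 : ℕ) • u = y⁺ := by rw [one_nsmul, hu, inf_idem]
      calc f y⁺ = f (y⁺ ⊓ (1 : ℕ) • u) := by rw [e]
        _ ≤ h₀ y⁺ := le_ciSup (hbdd _ (posPart_nonneg y)) 1
    have hneg : h₀ y⁻ = 0 := by
      have hz : ∀ n : ℕ, f (y⁻ ⊓ n • u) = 0 := by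
        intro n
        have hd : y⁻ ⊓ n • u = 0 := by
          refine my_disjoint_nsmul (negPart_nonneg y) hu0 ?_ n
          rw [hu, inf_comm]
          exact posPart_inf_negPart_eq_zero y
        rw [hd, map_zero]
      have : h₀ y⁻ = ⨆ n : ℕ, f (y⁻ ⊓ n • u) := rfl
      rw [this]
      simp only [hz, ciSup_const]
    have hTy : T y = f y⁺ := by rw [hT, hpos, hneg, sub_zero]
    have expand : P.toDual (g₀ + g₀ - f') y = T y + T y - f y := by
      rw [map_sub, map_add, hg₀, ContinuousLinearMap.sub_apply, ContinuousLinearMap.add_apply]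
    have e1 : f |y| = f y⁺ + f y⁻ := by rw [← map_add, posPart_add_negPart]
    have e2 : f y = f y⁺ - f y⁻ := by rw [← map_sub, posPart_sub_negPart]
    rw [expand, hTy]
    have : P.toDual f' |y| = f |y| := rfl
    rw [this]
    linarith

lemma my_bddAbove (P : DualPairing E E') (h' : E') {B : Set E} {D : ℝ}
    (hD : ∀ x ∈ B, ‖x‖ ≤ D) :
    BddAbove (Set.range fun x : E => ⨆ _ : x ∈ B, |P.toDual h' x|) := by
  refine ⟨max (‖h'‖ * D) 0, ?_⟩
  rintro - ⟨x, rfl⟩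
  show (⨆ _ : x ∈ B, |P.toDual h' x|) ≤ max (‖h'‖ * D) 0
  by_cases hx : x ∈ B
  · have h1 : (⨆ _ : x ∈ B, |P.toDual h' x|) = |P.toDual h' x| := by
      haveI : Nonempty (x ∈ B) := ⟨hx⟩
      exact ciSup_const
    rw [h1]
    refine le_max_of_le_left ?_
    have h2 := (P.toDual h').le_opNorm x
    rw [Real.norm_eq_abs] at h2
    refine h2.trans ?_
    rw [P.toDual.norm_map h']
    exact mul_le_mul_of_nonneg_left (hD x hx) (norm_nonneg h')
  · haveI : IsEmpty (x ∈ B) := ⟨hx⟩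
    rw [Real.iSup_of_isEmpty]
    exact le_max_right _ _

lemma my_le_biSup (P : DualPairing E E') (h' : E') {B : Set E} {D : ℝ}
    (hD : ∀ x ∈ B, ‖x‖ ≤ D) {x : E} (hx : x ∈ B) :
    |P.toDual h' x| ≤ ⨆ z ∈ B, |P.toDual h' z| := by
  have h1 : (⨆ _ : x ∈ B, |P.toDual h' x|) = |P.toDual h' x| := by
    haveI : Nonempty (x ∈ B) := ⟨hx⟩
    exact ciSup_const
  rw [← h1]
  exact le_ciSup (my_bddAbove P h' hD) x

end MyPairAux

/-- The solid hull of a weak L-weakly compact set is weak L-weakly compact. -/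
theorem stmt1 {E : Type*} [NormedAddCommGroup E] [Lattice E] [HasSolidNorm E] [IsOrderedAddMonoid E] [NormedSpace ℝ E] [CompleteSpace E] {E' : Type*} [NormedAddCommGroup E'] [Lattice E'] [HasSolidNorm E'] [IsOrderedAddMonoid E'] [NormedSpace ℝ E'] [CompleteSpace E']
    (P : DualPairing E E') (A : Set E) (hA : WeakLWCSet P A) :
    WeakLWCSet P (SolidHull A) := by
  obtain ⟨hAb, hAs⟩ := hA
  obtain ⟨D, hD⟩ := isBounded_iff_forall_norm_le.mp hAb
  have hSolD : ∀ x ∈ SolidHull A, ‖x‖ ≤ D := by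
    rintro x ⟨y, hy, hxy⟩
    exact (HasSolidNorm.solid hxy).trans (hD y hy)
  constructor
  · exact isBounded_iff_forall_norm_le.mpr ⟨D, hSolD⟩
  intro f hfb hfun
  rcases Set.eq_empty_or_nonempty A with hAe | ⟨y₀, hy₀⟩
  · have hS : SolidHull A = ∅ := by
      ext x
      simp [SolidHull, hAe]
    have hzero : ∀ n, (⨆ x ∈ SolidHull A, |P.toDual (f n) x|) = 0 := by
      intro n
      rw [hS]
      have e : ∀ x : E, (⨆ _ : x ∈ (∅ : Set E), |P.toDual (f n) x|) = 0 := by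
        intro x
        haveI : IsEmpty (x ∈ (∅ : Set E)) := ⟨fun h => h⟩
        exact Real.iSup_of_isEmpty _
      simp only [e, ciSup_const]
    simp only [hzero]
    exact tendsto_const_nhds
  · by_contra hcon
    obtain ⟨C, hC⟩ := hfb
    have hSnonneg : ∀ n, 0 ≤ ⨆ x ∈ SolidHull A, |P.toDual (f n) x| := by
      intro n
      have hy₀S : y₀ ∈ SolidHull A := ⟨y₀, hy₀, le_rfl⟩
      exact (abs_nonneg _).trans (my_le_biSup P (f n) hSolD hy₀S)
    rw [Metric.tendsto_atTop] at hcon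
    push_neg at hcon
    obtain ⟨ε, hε, hfreq⟩ := hcon
    have hfreq' : ∃ᶠ n in atTop, ε ≤ ⨆ x ∈ SolidHull A, |P.toDual (f n) x| := by
      rw [Filter.frequently_atTop]
      intro N
      obtain ⟨n, hn, hd⟩ := hfreq N
      refine ⟨n, hn, ?_⟩
      rwa [Real.dist_eq, sub_zero, abs_of_nonneg (hSnonneg n)] at hd
    obtain ⟨φ, hφ, hφε⟩ := Filter.extraction_of_frequently_atTop hfreq'
    have hexists : ∀ k, ∃ g : E', |g| ≤ |f (φ k)| ∧ ∃ y ∈ A, ε / 2 < P.toDual g y := by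
      intro k
      have hlt : ε / 2 < ⨆ x ∈ SolidHull A, |P.toDual (f (φ k)) x| :=
        lt_of_lt_of_le (half_lt_self hε) (hφε k)
      obtain ⟨x, hx⟩ := exists_lt_of_lt_ciSup hlt
      by_cases hxS : x ∈ SolidHull A
      swap
      · haveI : IsEmpty (x ∈ SolidHull A) := ⟨hxS⟩
        rw [Real.iSup_of_isEmpty] at hx
        exact absurd hx (not_lt.mpr (le_of_lt (half_pos hε)))
      haveI : Nonempty (x ∈ SolidHull A) := ⟨hxS⟩
      rw [ciSup_const] at hx
      have hx2 := hx
      obtain ⟨y, hyA, hxy⟩ := hxS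
      have h1 : |P.toDual (f (φ k)) x| ≤ P.toDual |f (φ k)| |x| := my_abs_apply_le P _ x
      have h2 : P.toDual |f (φ k)| |x| ≤ P.toDual |f (φ k)| |y| :=
        my_toDual_mono P (abs_nonneg _) hxy
      obtain ⟨g, hg1, hg2⟩ := my_component P (abs_nonneg (f (φ k))) y
      exact ⟨g, hg1, y, hyA, lt_of_lt_of_le hx2 (h1.trans (h2.trans hg2))⟩
    choose g hg hyall using hexists
    choose yk hykA hyk using hyall
    have hgb : NormBddSeq g := by
      refine ⟨C, fun k => ?_⟩
      have h1 : ‖g k‖ ≤ ‖|f (φ k)|‖ := by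
        refine HasSolidNorm.solid ?_
        rw [abs_abs]
        exact hg k
      rw [norm_abs_eq_norm] at h1
      exact h1.trans (hC (φ k))
    have hgun : UnNullSeq g := by
      intro u hu
      have hle : ∀ k, ‖|g k| ⊓ u‖ ≤ ‖|f (φ k)| ⊓ u‖ := by
        intro k
        refine HasSolidNorm.solid ?_
        rw [abs_of_nonneg (le_inf (abs_nonneg _) hu), abs_of_nonneg (le_inf (abs_nonneg _) hu)]
        exact inf_le_inf_right u (hg k)
      have h2 : Tendsto (fun k => ‖|f (φ k)| ⊓ u‖) atTop (𝓝 0) := by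
        have := (hfun u hu).comp hφ.tendsto_atTop
        exact this
      exact squeeze_zero (fun k => norm_nonneg _) hle h2
    have htend := hAs g hgb hgun
    have hev : ∀ᶠ k in atTop, (⨆ x ∈ A, |P.toDual (g k) x|) < ε / 2 :=
      htend (Iio_mem_nhds (half_pos hε))
    obtain ⟨k, hk⟩ := hev.exists
    have hgt : ε / 2 < ⨆ x ∈ A, |P.toDual (g k) x| :=
      lt_of_lt_of_le (hyk k) ((le_abs_self _).trans (my_le_biSup P (g k) hD (hykA k)))
    exact absurd hk (not_lt.mpr hgt.le)
end

section
/- Let E be a Banach lattice and A ⊆ E a weak L-weakly compact set. Then the convex hull of the solid hull of A is weak L-weakly compact. -/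
open Filter Topology Bornology

section SmulAux
variable {G : Type*} [NormedAddCommGroup G] [Lattice G] [HasSolidNorm G] [IsOrderedAddMonoid G] [NormedSpace ℝ G]

private lemma first_aux {z : G} (m : ℕ) : (2 ^ m * 2) • z = 2 ^ m • (2 • z) :=
  mul_nsmul' z (2 ^ m) 2

private lemma two_pow_nsmul_nonneg {z : G} : ∀ m : ℕ, 0 ≤ (2 ^ m : ℕ) • z → 0 ≤ z
  | 0, h => by simpa using h
  | (m + 1), h => by
    have h2 : (0 : G) ≤ (2 ^ m : ℕ) • (2 • z) := by
      rw [pow_succ] at h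
      rwa [first_aux] at h
    have := two_pow_nsmul_nonneg m h2
    exact nsmul_two_semiclosed this

lemma real_smul_nonneg' {c : ℝ} (hc : 0 ≤ c) {x : G} (hx : 0 ≤ x) : 0 ≤ c • x := by
  have key : ∀ k m : ℕ, 0 ≤ ((k : ℝ) / 2 ^ m) • x := by
    intro k m
    refine two_pow_nsmul_nonneg m ?_
    have h1 : (2 ^ m : ℕ) • (((k : ℝ) / 2 ^ m) • x) = (k : ℕ) • x := by
      rw [← Nat.cast_smul_eq_nsmul ℝ, ← Nat.cast_smul_eq_nsmul ℝ (k) x, smul_smul]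
      congr 1
      push_cast
      field_simp
    rw [h1]
    exact nsmul_nonneg hx k
  set d : ℕ → ℝ := fun n => (⌊c * 2 ^ n⌋₊ : ℝ) / 2 ^ n with hd_def
  have hpow : ∀ n : ℕ, (0:ℝ) < 2 ^ n := fun n => by positivity
  have hdle : ∀ n, d n ≤ c := fun n => by
    rw [hd_def, div_le_iff₀ (hpow n)]
    exact Nat.floor_le (by positivity)
  have hdge : ∀ n, c - (1/2) ^ n ≤ d n := fun n => by
    rw [hd_def, le_div_iff₀ (hpow n)]
    have := Nat.sub_one_lt_floor (c * 2 ^ n)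
    have h2 : (c - (1/2) ^ n) * 2 ^ n = c * 2 ^ n - 1 := by
      rw [sub_mul, ← mul_pow]; norm_num
    rw [h2]
    linarith
  have hdc : Tendsto d atTop (𝓝 c) := by
    have hl : Tendsto (fun n : ℕ => c - (1/2 : ℝ) ^ n) atTop (𝓝 c) := by
      have := tendsto_pow_atTop_nhds_zero_of_lt_one (by norm_num : (0:ℝ) ≤ 1/2)
        (by norm_num : (1/2:ℝ) < 1)
      simpa using (tendsto_const_nhds (x := c)).sub this
    exact tendsto_of_tendsto_of_tendsto_of_le_of_le hl tendsto_const_nhds hdge hdle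
  have hT : Tendsto (fun n => d n • x) atTop (𝓝 (c • x)) := hdc.smul_const x
  refine ge_of_tendsto' hT fun n => ?_
  have : d n = ((⌊c * 2 ^ n⌋₊ : ℕ) : ℝ) / 2 ^ n := rfl
  rw [this]
  exact key _ _

lemma real_smul_mono {c : ℝ} (hc : 0 ≤ c) {a b : G} (h : a ≤ b) : c • a ≤ c • b := by
  have := real_smul_nonneg' hc (sub_nonneg.2 h)
  rwa [smul_sub, sub_nonneg] at this

lemma abs_smul_pos {c : ℝ} (hc : 0 < c) (x : G) : |c • x| = c • |x| := by
  refine le_antisymm ?_ ?_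
  · refine abs_le'.2 ⟨real_smul_mono hc.le (le_abs_self x), ?_⟩
    rw [← smul_neg]
    exact real_smul_mono hc.le (neg_le_abs x)
  · have h1 : |x| ≤ c⁻¹ • |c • x| := by
      refine abs_le'.2 ⟨?_, ?_⟩
      · calc x = c⁻¹ • (c • x) := by rw [smul_smul, inv_mul_cancel₀ hc.ne', one_smul]
        _ ≤ c⁻¹ • |c • x| := real_smul_mono (inv_nonneg.2 hc.le) (le_abs_self _)
      · calc -x = c⁻¹ • (-(c • x)) := by
              rw [smul_neg]; congr 1
              rw [smul_smul, inv_mul_cancel₀ hc.ne', one_smul]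
        _ ≤ c⁻¹ • |c • x| := real_smul_mono (inv_nonneg.2 hc.le) (neg_le_abs _)
    calc c • |x| ≤ c • (c⁻¹ • |c • x|) := real_smul_mono hc.le h1
    _ = |c • x| := by rw [smul_smul, mul_inv_cancel₀ hc.ne', one_smul]

end SmulAux

section RealSupAux
variable {E : Type*}

lemma real_biSup_le {s : Set E} {g : E → ℝ} {a : ℝ} (ha : 0 ≤ a)
    (h : ∀ x ∈ s, g x ≤ a) : (⨆ x ∈ s, g x) ≤ a :=
  Real.iSup_le (fun x => Real.iSup_le (fun hx => h x hx) ha) ha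

lemma le_real_biSup {s : Set E} {g : E → ℝ} {C : ℝ} (hC : ∀ x ∈ s, g x ≤ C)
    {x : E} (hx : x ∈ s) : g x ≤ ⨆ x ∈ s, g x := by
  have hbdd : BddAbove (Set.range fun x => ⨆ _ : x ∈ s, g x) := by
    refine ⟨max C 0, ?_⟩
    rintro _ ⟨y, rfl⟩
    show (⨆ _ : y ∈ s, g y) ≤ max C 0
    by_cases hy : y ∈ s
    · rw [ciSup_pos (p := y ∈ s) (f := fun _ => g y) hy]
      exact le_max_of_le_left (hC y hy)
    · haveI : IsEmpty (y ∈ s) := ⟨hy⟩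
      rw [Real.iSup_of_isEmpty (fun _ : y ∈ s => g y)]
      exact le_max_right _ _
  have h1 : g x = ⨆ _ : x ∈ s, g x := (ciSup_pos (p := x ∈ s) (f := fun _ => g x) hx).symm
  rw [h1]
  exact le_ciSup hbdd x

end RealSupAux

section DualAux
variable {E E' : Type*} [NormedAddCommGroup E] [Lattice E] [HasSolidNorm E] [IsOrderedAddMonoid E] [NormedSpace ℝ E]
  [NormedAddCommGroup E'] [Lattice E'] [HasSolidNorm E'] [IsOrderedAddMonoid E'] [NormedSpace ℝ E']

lemma DualPairing.apply_nonneg (P : DualPairing E E') {g : E'} (hg : 0 ≤ g) {x : E}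
    (hx : 0 ≤ x) : 0 ≤ P.toDual g x := (P.pos_iff g).1 hg x hx

lemma DualPairing.apply_mono (P : DualPairing E E') {g : E'} (hg : 0 ≤ g) {a b : E}
    (h : a ≤ b) : P.toDual g a ≤ P.toDual g b := by
  have h0 : 0 ≤ P.toDual g (b - a) := P.apply_nonneg hg (sub_nonneg.2 h)
  rw [map_sub] at h0
  linarith

lemma DualPairing.le_sub_apply (P : DualPairing E E') {g h : E'} (hgh : h ≤ g) {x : E}
    (hx : 0 ≤ x) : P.toDual h x ≤ P.toDual g x := by
  have h0 : 0 ≤ P.toDual (g - h) x := P.apply_nonneg (sub_nonneg.2 hgh) hx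
  rw [map_sub, ContinuousLinearMap.sub_apply] at h0
  linarith

lemma DualPairing.abs_apply_le (P : DualPairing E E') (g : E') (x : E) :
    |P.toDual g x| ≤ P.toDual |g| |x| := by
  have hgx : P.toDual g x = P.toDual g (x⁺) - P.toDual g (x⁻) := by
    rw [← map_sub, posPart_sub_negPart]
  have habs : P.toDual |g| |x| = P.toDual |g| (x⁺) + P.toDual |g| (x⁻) := by
    rw [← map_add, posPart_add_negPart]
  have h1 : P.toDual g (x⁺) ≤ P.toDual |g| (x⁺) :=
    P.le_sub_apply (le_abs_self g) (posPart_nonneg x)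
  have h2 : P.toDual g (x⁻) ≤ P.toDual |g| (x⁻) :=
    P.le_sub_apply (le_abs_self g) (negPart_nonneg x)
  have h3 : -P.toDual g (x⁺) ≤ P.toDual |g| (x⁺) := by
    have := P.le_sub_apply (neg_le_abs g) (posPart_nonneg x)
    rw [map_neg] at this
    simpa using this
  have h4 : -P.toDual g (x⁻) ≤ P.toDual |g| (x⁻) := by
    have := P.le_sub_apply (neg_le_abs g) (negPart_nonneg x)
    rw [map_neg] at this
    simpa using this
  rw [abs_le]
  constructor <;> rw [hgx, habs] <;> linarith

lemma exists_dual_abs (P : DualPairing E E') {g : E'} (hg : 0 ≤ g) (y : E) :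
    ∃ h : E', |h| ≤ g ∧ P.toDual h y = P.toDual g |y| := by
  by_cases hy : y = 0
  · refine ⟨0, by simpa using hg, ?_⟩
    subst hy
    simp
  · set N : E → ℝ := fun x => P.toDual g |x| with hN
    have N_nonneg : ∀ x, 0 ≤ N x := fun x => P.apply_nonneg hg (abs_nonneg x)
    have N_hom : ∀ c : ℝ, 0 < c → ∀ x, N (c • x) = c * N x := by
      intro c hc x
      simp only [hN]
      rw [abs_smul_pos hc, map_smul]
      rfl
    have N_add : ∀ x z, N (x + z) ≤ N x + N z := by
      intro x z
      calc N (x + z) ≤ P.toDual g (|x| + |z|) := P.apply_mono hg (abs_add_le x z)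
      _ = N x + N z := by rw [map_add]
    set f : E →ₗ.[ℝ] ℝ := LinearPMap.mkSpanSingleton y (P.toDual g |y|) hy with hf
    have hfle : ∀ x : f.domain, f x ≤ N x := by
      rintro ⟨v, hv⟩
      have hv' : v ∈ Submodule.span ℝ {y} := hv
      obtain ⟨c, rfl⟩ := Submodule.mem_span_singleton.1 hv'
      have happ : f ⟨c • y, hv⟩ = c • (P.toDual g |y|) :=
        LinearPMap.mkSpanSingleton'_apply _ _ _ c _
      rw [happ]
      rcases lt_trichotomy c 0 with h0 | h0 | h0
      · rw [smul_eq_mul]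
        have hN1 : (0:ℝ) ≤ P.toDual g |y| := P.apply_nonneg hg (abs_nonneg y)
        nlinarith [N_nonneg (c • y)]
      · subst h0
        simpa using N_nonneg ((0:ℝ) • y)
      · rw [N_hom c h0, smul_eq_mul]
    obtain ⟨ψ, hψeq, hψle⟩ := exists_extension_of_le_sublinear f N N_hom N_add hfle
    have hNle : ∀ x, N x ≤ ‖P.toDual g‖ * ‖x‖ := by
      intro x
      calc N x ≤ abs (P.toDual g |x|) := le_abs_self _
      _ ≤ ‖P.toDual g‖ * ‖|x|‖ := (P.toDual g).le_opNorm _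
      _ = ‖P.toDual g‖ * ‖x‖ := by rw [norm_abs_eq_norm]
    have hψbound : ∀ x, ‖ψ x‖ ≤ ‖P.toDual g‖ * ‖x‖ := by
      intro x
      rw [Real.norm_eq_abs, abs_le]
      constructor
      · have h1 := hψle (-x)
        rw [map_neg] at h1
        have h2 : N (-x) ≤ ‖P.toDual g‖ * ‖x‖ := by
          simpa [hN, abs_neg] using hNle x
        linarith
      · exact (hψle x).trans (hNle x)
    set Ψ : StrongDual ℝ E := LinearMap.mkContinuous ψ (‖P.toDual g‖) hψbound with hΨ
    have hΨapp : ∀ x, Ψ x = ψ x := fun x => rfl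
    refine ⟨P.toDual.symm Ψ, ?_, ?_⟩
    all_goals have hPΨ : P.toDual (P.toDual.symm Ψ) = Ψ := P.toDual.apply_symm_apply Ψ
    · set h : E' := P.toDual.symm Ψ
      have hle : ∀ x : E, 0 ≤ x → Ψ x ≤ P.toDual g x := by
        intro x hx
        calc Ψ x = ψ x := hΨapp x
        _ ≤ N x := hψle x
        _ = P.toDual g x := by rw [hN]; simp [abs_of_nonneg hx]
      have hge : ∀ x : E, 0 ≤ x → -(P.toDual g x) ≤ Ψ x := by
        intro x hx
        have h1 : Ψ (-x) ≤ P.toDual g |(-x)| := by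
          calc Ψ (-x) = ψ (-x) := hΨapp _
          _ ≤ N (-x) := hψle _
          _ = P.toDual g |(-x)| := rfl
        rw [abs_neg, abs_of_nonneg hx, map_neg] at h1
        linarith
      refine abs_le'.2 ⟨?_, ?_⟩
      · rw [← sub_nonneg]
        refine (P.pos_iff _).2 fun x hx => ?_
        have : P.toDual (g - h) x = P.toDual g x - Ψ x := by
          rw [map_sub, hPΨ]; rfl
        rw [this, sub_nonneg]
        exact hle x hx
      · rw [← sub_nonneg, sub_neg_eq_add]
        refine (P.pos_iff _).2 fun x hx => ?_
        have : P.toDual (g + h) x = P.toDual g x + Ψ x := by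
          rw [map_add, hPΨ]; rfl
        rw [this]
        have := hge x hx
        linarith
    · rw [hPΨ]
      have hy_mem : y ∈ f.domain := by
        rw [hf, LinearPMap.domain_mkSpanSingleton]
        exact Submodule.mem_span_singleton_self y
      have h1 := hψeq ⟨y, hy_mem⟩
      have h2 : f ⟨y, hy_mem⟩ = P.toDual g |y| :=
        LinearPMap.mkSpanSingleton_apply ℝ ℝ hy _
      rw [hΨapp, h1, h2]

end DualAux

/-- The convex hull of the solid hull of a weak L-weakly compact set is weak L-weakly
compact. -/
theorem stmt2 {E : Type*} [NormedAddCommGroup E] [Lattice E] [HasSolidNorm E] [IsOrderedAddMonoid E] [NormedSpace ℝ E] [CompleteSpace E] {E' : Type*} [NormedAddCommGroup E'] [Lattice E'] [HasSolidNorm E'] [IsOrderedAddMonoid E'] [NormedSpace ℝ E'] [CompleteSpace E']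
    (P : DualPairing E E') (A : Set E) (hA : WeakLWCSet P A) :
    WeakLWCSet P (convexHull ℝ (SolidHull A)) := by
  obtain ⟨hAb, hAseq⟩ := hA
  obtain ⟨CA, hCA⟩ := isBounded_iff_forall_norm_le.1 hAb
  have hSol_norm : ∀ z ∈ SolidHull A, ‖z‖ ≤ CA := by
    rintro z ⟨yy, hy, hzy⟩
    exact (HasSolidNorm.solid hzy).trans (hCA yy hy)
  rcases A.eq_empty_or_nonempty with rfl | ⟨a0, ha0⟩
  · have hempty : SolidHull (∅ : Set E) = (∅ : Set E) := by
      ext z; simp [SolidHull]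
    constructor
    · rw [hempty, convexHull_empty]
      exact Bornology.isBounded_empty
    · intro f _ _
      have hzero : ∀ n, (⨆ x ∈ convexHull ℝ (SolidHull (∅ : Set E)), |P.toDual (f n) x|)
          = 0 := by
        intro n
        rw [hempty, convexHull_empty]
        have h1 : ∀ x : E, (⨆ _ : x ∈ (∅ : Set E), |P.toDual (f n) x|) = 0 := by
          intro x
          haveI : IsEmpty (x ∈ (∅ : Set E)) := ⟨fun h => h⟩
          exact Real.iSup_of_isEmpty _
        simp only [h1]
        exact Real.iSup_const_zero
      simp only [hzero]
      exact tendsto_const_nhds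
  have hCA0 : (0:ℝ) ≤ CA := (norm_nonneg a0).trans (hCA a0 ha0)
  have ha0S : a0 ∈ SolidHull A := ⟨a0, ha0, le_rfl⟩
  have hC_norm : ∀ x ∈ convexHull ℝ (SolidHull A), ‖x‖ ≤ CA := by
    intro x hx
    have hsub : SolidHull A ⊆ Metric.closedBall (0:E) CA := by
      intro z hz
      rw [Metric.mem_closedBall, dist_zero_right]
      exact hSol_norm z hz
    have := convexHull_min hsub (convex_closedBall (0:E) CA) hx
    rwa [Metric.mem_closedBall, dist_zero_right] at this
  constructor
  · exact isBounded_iff_forall_norm_le.2 ⟨CA, hC_norm⟩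
  intro f hfb hfu
  obtain ⟨Cf, hCf⟩ := hfb
  have hCf0 : (0:ℝ) ≤ Cf := (norm_nonneg (f 0)).trans (hCf 0)
  have hbound : ∀ n, ∀ x : E, ‖x‖ ≤ CA → |P.toDual (f n) x| ≤ Cf * CA := by
    intro n x hx
    calc |P.toDual (f n) x| ≤ ‖P.toDual (f n)‖ * ‖x‖ := (P.toDual (f n)).le_opNorm x
    _ = ‖f n‖ * ‖x‖ := by rw [P.toDual.norm_map]
    _ ≤ Cf * CA := mul_le_mul (hCf n) hx (norm_nonneg x) hCf0
  set SolS : ℕ → ℝ := fun n => ⨆ z ∈ SolidHull A, |P.toDual (f n) z| with hSolS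
  have hSolS_nonneg : ∀ n, 0 ≤ SolS n := by
    intro n
    exact (abs_nonneg _).trans
      (le_real_biSup (fun z hz => hbound n z (hSol_norm z hz)) ha0S)
  have hS_le : ∀ n, (⨆ x ∈ convexHull ℝ (SolidHull A), |P.toDual (f n) x|) ≤ SolS n := by
    intro n
    refine real_biSup_le (hSolS_nonneg n) fun x hx => ?_
    have hconv : ConvexOn ℝ (Set.univ : Set E) (fun x => |P.toDual (f n) x|) := by
      refine ⟨convex_univ, ?_⟩
      intro u _ v _ a b ha hb hab
      simp only [map_add, map_smul, smul_eq_mul]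
      calc |a * P.toDual (f n) u + b * P.toDual (f n) v|
          ≤ |a * P.toDual (f n) u| + |b * P.toDual (f n) v| := abs_add_le _ _
      _ = a * |P.toDual (f n) u| + b * |P.toDual (f n) v| := by
          rw [abs_mul, abs_mul, abs_of_nonneg ha, abs_of_nonneg hb]
    obtain ⟨z, hz, hxz⟩ := hconv.exists_ge_of_mem_convexHull (Set.subset_univ _) hx
    exact hxz.trans (le_real_biSup (fun w hw => hbound n w (hSol_norm w hw)) hz)
  have hz_ex : ∀ n, ∃ z ∈ SolidHull A, SolS n ≤ |P.toDual (f n) z| + 1/((n:ℝ)+1) := by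
    intro n
    have hεpos : (0:ℝ) < 1/((n:ℝ)+1) := by positivity
    by_cases hc : SolS n < 1/((n:ℝ)+1)
    · refine ⟨a0, ha0S, ?_⟩
      have := abs_nonneg (P.toDual (f n) a0)
      linarith
    · push_neg at hc
      by_contra hcon
      push_neg at hcon
      have : SolS n ≤ SolS n - 1/((n:ℝ)+1) := by
        refine real_biSup_le (by linarith) fun w hw => ?_
        have := hcon w hw
        linarith
      linarith
  choose z hzS hzle using hz_ex
  choose y hyA hzy' using fun n => hzS n
  choose h hhabs hhy using fun n => exists_dual_abs P (abs_nonneg (f n)) (y n)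
  have hhnorm : ∀ n, ‖h n‖ ≤ Cf := by
    intro n
    have h1 : |h n| ≤ |(|f n|)| := by rw [abs_abs]; exact hhabs n
    calc ‖h n‖ ≤ ‖|f n|‖ := HasSolidNorm.solid h1
    _ = ‖f n‖ := norm_abs_eq_norm _
    _ ≤ Cf := hCf n
  have hhun : UnNullSeq h := by
    intro u hu
    have hle : ∀ n, ‖|h n| ⊓ u‖ ≤ ‖|f n| ⊓ u‖ := by
      intro n
      refine HasSolidNorm.solid ?_
      have h1 : (0:E') ≤ |h n| ⊓ u := le_inf (abs_nonneg _) hu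
      have h2 : (0:E') ≤ |f n| ⊓ u := le_inf (abs_nonneg _) hu
      rw [abs_of_nonneg h1, abs_of_nonneg h2]
      exact inf_le_inf_right u (hhabs n)
    exact tendsto_of_tendsto_of_tendsto_of_le_of_le tendsto_const_nhds (hfu u hu)
      (fun n => norm_nonneg _) hle
  have hA_tend := hAseq h ⟨Cf, hhnorm⟩ hhun
  have hchain : ∀ n, SolS n ≤ (⨆ x ∈ A, |P.toDual (h n) x|) + 1/((n:ℝ)+1) := by
    intro n
    have c1 : |P.toDual (f n) (z n)| ≤ P.toDual |f n| |z n| := P.abs_apply_le (f n) (z n)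
    have c2 : P.toDual |f n| |z n| ≤ P.toDual |f n| |y n| :=
      P.apply_mono (abs_nonneg _) (hzy' n)
    have c3 : P.toDual (h n) (y n) ≤ |P.toDual (h n) (y n)| := le_abs_self _
    have c4 : |P.toDual (h n) (y n)| ≤ ⨆ x ∈ A, |P.toDual (h n) x| := by
      refine le_real_biSup (g := fun w => |P.toDual (h n) w|) (C := Cf * CA) (fun w hw => ?_) (hyA n)
      calc |P.toDual (h n) w| ≤ ‖P.toDual (h n)‖ * ‖w‖ := (P.toDual (h n)).le_opNorm w
      _ = ‖h n‖ * ‖w‖ := by rw [P.toDual.norm_map]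
      _ ≤ Cf * CA := mul_le_mul (hhnorm n) (hCA w hw) (norm_nonneg _) hCf0
    have c5 := hzle n
    have c6 := hhy n
    linarith
  have hup : Tendsto (fun n => (⨆ x ∈ A, |P.toDual (h n) x|) + 1/((n:ℝ)+1)) atTop (𝓝 0) := by
    have h2 : Tendsto (fun n : ℕ => 1/((n:ℝ)+1)) atTop (𝓝 0) :=
      tendsto_one_div_add_atTop_nhds_zero_nat
    simpa using hA_tend.add h2
  have hlow : ∀ n, (0:ℝ) ≤ ⨆ x ∈ convexHull ℝ (SolidHull A), |P.toDual (f n) x| :=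
    fun n => Real.iSup_nonneg fun x => Real.iSup_nonneg fun _ => abs_nonneg _
  exact tendsto_of_tendsto_of_tendsto_of_le_of_le tendsto_const_nhds hup hlow
    (fun n => (hS_le n).trans (hchain n))
end
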